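/- Let A be a nonempty finite type and let μ be the product probability measure on ℕ → A whose coordinates are independent and uniformly distributed on A. For each t ≥ 1 let S_t be a set of words of length t over A (functions Fin t → A), and assume the family is stable under insertion into longer words: whenever w ∈ S_t, a, b ∈ ℕ, u is a word of length a and v is a word of length b, the concatenation u·w·v belongs to S_{a+t+b}. Then the events E_t = {ω : (ω 0, …, ω (t−1)) ∈ S_t} are nondecreasing in t, lim_{t→∞} μ(E_t) exists and belongs to {0,1}, and the limit equals 1 if and only if μ(E_t) > 0 for some t. (This is the paper's zero–one lemma: for every input-free symmetry-breaking task and randomness configuration, lim_{t→∞} Pr[𝒫(t) solves 𝒪 | α] ∈ {0,1}, and positive probability at some time forces eventual solvability.) -/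

import Mathlib

open MeasureTheory Filter
open scoped ENNReal

private lemma castMem' {A : Type} (S : (t : ℕ) → Set (Fin t → A)) (ω : ℕ → A)
    {n m : ℕ} (h : n = m) (hx : (fun s : Fin n => ω (s : ℕ)) ∈ S n) :
    (fun s : Fin m => ω (s : ℕ)) ∈ S m := by subst h; exact hx

private lemma cylinder_bound' {A : Type} [Fintype A] [MeasurableSpace A]
    (μ : Measure (ℕ → A))
    (hμ : ∀ (t : ℕ) (y : Fin t → A),
      μ {ω | ∀ s : Fin t, ω (s : ℕ) = y s} = (Fintype.card A : ℝ≥0∞)⁻¹ ^ t)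
    (m : ℕ) (T : Set (Fin m → A)) :
    μ {ω | (fun s : Fin m => ω (s : ℕ)) ∈ T} ≤
      (Nat.card T : ℝ≥0∞) * (Fintype.card A : ℝ≥0∞)⁻¹ ^ m := by
  classical
  have hsub : {ω : ℕ → A | (fun s : Fin m => ω (s : ℕ)) ∈ T} =
      ⋃ y ∈ T.toFinset, {ω : ℕ → A | ∀ s : Fin m, ω (s : ℕ) = y s} := by
    ext ω
    simp only [Set.mem_setOf_eq, Set.mem_iUnion, Set.mem_toFinset]
    constructor
    · intro h; exact ⟨_, h, fun s => rfl⟩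
    · rintro ⟨y, hy, h⟩
      have hy' : (fun s : Fin m => ω (s : ℕ)) = y := funext h
      rw [hy']; exact hy
  rw [hsub]
  calc μ (⋃ y ∈ T.toFinset, {ω : ℕ → A | ∀ s : Fin m, ω (s : ℕ) = y s})
      ≤ ∑ y ∈ T.toFinset, μ {ω : ℕ → A | ∀ s : Fin m, ω (s : ℕ) = y s} :=
        measure_biUnion_finset_le _ _
    _ = T.toFinset.card * (Fintype.card A : ℝ≥0∞)⁻¹ ^ m := by
        rw [Finset.sum_congr rfl (fun y _ => hμ m y), Finset.sum_const, nsmul_eq_mul]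
    _ = _ := by rw [Set.toFinset_card, ← Nat.card_eq_fintype_card]

private lemma key' {A : Type} [Fintype A] [Nonempty A] [MeasurableSpace A]
    (μ : Measure (ℕ → A)) [IsProbabilityMeasure μ]
    (hμ : ∀ (t : ℕ) (y : Fin t → A),
      μ {ω | ∀ s : Fin t, ω (s : ℕ) = y s} = (Fintype.card A : ℝ≥0∞)⁻¹ ^ t)
    (S : (t : ℕ) → Set (Fin t → A))
    (hS : ∀ t, 1 ≤ t → ∀ w ∈ S t, ∀ a b : ℕ, ∀ z : ℕ → A,
      (∀ s : Fin t, z (a + (s : ℕ)) = w s) →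
      (fun m : Fin (a + t + b) => z (m : ℕ)) ∈ S (a + t + b))
    (cyl : ∀ (m : ℕ) (T : Set (Fin m → A)),
      μ {ω | (fun s : Fin m => ω (s : ℕ)) ∈ T} ≤
        (Nat.card T : ℝ≥0∞) * (Fintype.card A : ℝ≥0∞)⁻¹ ^ m)
    {t₀ : ℕ} (ht₀ : 1 ≤ t₀) (hne : (S t₀).Nonempty) (n : ℕ) :
    (1 : ℝ≥0∞) ≤ μ {ω | (fun s : Fin (n * t₀) => ω (s : ℕ)) ∈ S (n * t₀)} +
      ((Fintype.card A ^ t₀ - 1 : ℕ) : ℝ≥0∞) ^ n * (Fintype.card A : ℝ≥0∞)⁻¹ ^ (n * t₀) := by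
  classical
  set m := n * t₀ with hm
  have hidx : ∀ (k : Fin n) (r : Fin t₀), (k : ℕ) * t₀ + (r : ℕ) < m := by
    intro k r
    have hk : (k : ℕ) + 1 ≤ n := k.isLt
    calc (k : ℕ) * t₀ + (r : ℕ) < (k : ℕ) * t₀ + t₀ := by omega
      _ = ((k : ℕ) + 1) * t₀ := by ring
      _ ≤ n * t₀ := Nat.mul_le_mul_right _ hk
  set T : Set (Fin m → A) :=
    {u | ∀ k : Fin n, (fun r : Fin t₀ => u ⟨(k : ℕ) * t₀ + (r : ℕ), hidx k r⟩) ∉ S t₀} with hT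
  -- complement inclusion
  have hcompl : {ω : ℕ → A | (fun s : Fin m => ω (s : ℕ)) ∈ S m}ᶜ ⊆
      {ω : ℕ → A | (fun s : Fin m => ω (s : ℕ)) ∈ T} := by
    intro ω hω
    intro k
    by_contra hk
    apply hω
    have hle : (k : ℕ) * t₀ + t₀ ≤ m := by
      have hk1 : (k : ℕ) + 1 ≤ n := k.isLt
      calc (k : ℕ) * t₀ + t₀ = ((k : ℕ) + 1) * t₀ := by ring
        _ ≤ n * t₀ := Nat.mul_le_mul_right _ hk1
    have := hS t₀ ht₀ _ hk ((k : ℕ) * t₀) (m - ((k : ℕ) * t₀ + t₀)) ω (fun s => rfl)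
    exact castMem' S ω (by omega) this
  -- cardinality bound
  have hcardT : Nat.card T ≤ (Fintype.card A ^ t₀ - 1) ^ n := by
    set Bad := {w : Fin t₀ → A | w ∉ S t₀} with hBad
    have hinj : Function.Injective (fun (u : T) (k : Fin n) =>
        (⟨fun r : Fin t₀ => (u : Fin m → A) ⟨(k : ℕ) * t₀ + (r : ℕ), hidx k r⟩, u.2 k⟩ : Bad)) := by
      intro u v huv
      ext i
      have ht0 : 0 < t₀ := ht₀
      have hkn : (i : ℕ) / t₀ < n := by
        rw [Nat.div_lt_iff_lt_mul ht0]
        exact i.isLt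
      have hrt : (i : ℕ) % t₀ < t₀ := Nat.mod_lt _ ht0
      have h1 := congrFun huv ⟨(i : ℕ) / t₀, hkn⟩
      have h2 := congrFun (congrArg Subtype.val h1) ⟨(i : ℕ) % t₀, hrt⟩
      have hival : (i : ℕ) / t₀ * t₀ + (i : ℕ) % t₀ = (i : ℕ) := by
        rw [mul_comm]; exact Nat.div_add_mod _ _
      have hfin : (⟨(i : ℕ) / t₀ * t₀ + (i : ℕ) % t₀, hidx ⟨_, hkn⟩ ⟨_, hrt⟩⟩ : Fin m) = i :=
        Fin.ext hival
      rw [← hfin]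
      exact h2
    have h1 : Nat.card T ≤ Nat.card (Fin n → Bad) := Nat.card_le_card_of_injective _ hinj
    have h2 : Nat.card (Fin n → Bad) = Nat.card Bad ^ n := by
      rw [Nat.card_fun]; simp
    have h3 : Nat.card Bad ≤ Fintype.card A ^ t₀ - 1 := by
      obtain ⟨w₀, hw₀⟩ := hne
      have hlt : Nat.card Bad < Nat.card (Fin t₀ → A) := by
        have : ¬ (w₀ ∈ {w : Fin t₀ → A | w ∉ S t₀}) := by simp [hw₀]
        exact Finite.card_subtype_lt this
      have hcf : Nat.card (Fin t₀ → A) = Fintype.card A ^ t₀ := by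
        rw [Nat.card_eq_fintype_card]; simp
      omega
    calc Nat.card T ≤ Nat.card Bad ^ n := h1.trans (le_of_eq h2)
      _ ≤ (Fintype.card A ^ t₀ - 1) ^ n := Nat.pow_le_pow_left h3 n
  -- put things together
  have hb : μ {ω : ℕ → A | (fun s : Fin m => ω (s : ℕ)) ∈ S m}ᶜ ≤
      ((Fintype.card A ^ t₀ - 1 : ℕ) : ℝ≥0∞) ^ n * (Fintype.card A : ℝ≥0∞)⁻¹ ^ m := by
    refine (measure_mono hcompl).trans ((cyl m T).trans ?_)
    gcongr
    rw [← Nat.cast_pow]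
    exact_mod_cast hcardT
  calc (1 : ℝ≥0∞) = μ Set.univ := measure_univ.symm
    _ = μ ({ω : ℕ → A | (fun s : Fin m => ω (s : ℕ)) ∈ S m} ∪
        {ω : ℕ → A | (fun s : Fin m => ω (s : ℕ)) ∈ S m}ᶜ) := by
        rw [Set.union_compl_self]
    _ ≤ μ {ω : ℕ → A | (fun s : Fin m => ω (s : ℕ)) ∈ S m} +
        μ {ω : ℕ → A | (fun s : Fin m => ω (s : ℕ)) ∈ S m}ᶜ := measure_union_le _ _
    _ ≤ _ := add_le_add_right hb _

/-- **Zero–one lemma.** Let `μ` be the i.i.d. uniform product measure on `ℕ → A` (characterized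
by its cylinder probabilities `hμ`) over a nonempty finite type `A`. For `t ≥ 1` let `S t` be
a set of words of length `t`, stable under insertion into longer words (`hS`: if the window of
length `t` starting at position `a` of `z` is a word of `S t`, then the length-`(a+t+b)` prefix
of `z` is in `S (a+t+b)`). Then the events `E t` are nondecreasing for `t ≥ 1`, `μ (E t)` has a
limit `L ∈ {0,1}`, and `L = 1` iff `μ (E t) > 0` for some `t ≥ 1`. -/
theorem zero_one_law_for_solving (A : Type) [Fintype A] [Nonempty A] [MeasurableSpace A]
    (μ : Measure (ℕ → A)) [IsProbabilityMeasure μ]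
    (hμ : ∀ (t : ℕ) (y : Fin t → A),
      μ {ω | ∀ s : Fin t, ω (s : ℕ) = y s} = (Fintype.card A : ℝ≥0∞)⁻¹ ^ t)
    (S : (t : ℕ) → Set (Fin t → A))
    (hS : ∀ t, 1 ≤ t → ∀ w ∈ S t, ∀ a b : ℕ, ∀ z : ℕ → A,
      (∀ s : Fin t, z (a + (s : ℕ)) = w s) →
      (fun m : Fin (a + t + b) => z (m : ℕ)) ∈ S (a + t + b)) :
    (∀ t, 1 ≤ t →
      {ω : ℕ → A | (fun s : Fin t => ω (s : ℕ)) ∈ S t} ⊆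
        {ω : ℕ → A | (fun s : Fin (t + 1) => ω (s : ℕ)) ∈ S (t + 1)}) ∧
    ∃ L : ℝ≥0∞,
      Tendsto (fun t : ℕ => μ {ω | (fun s : Fin t => ω (s : ℕ)) ∈ S t}) atTop (nhds L) ∧
      (L = 0 ∨ L = 1) ∧
      (L = 1 ↔ ∃ t, 1 ≤ t ∧ 0 < μ {ω | (fun s : Fin t => ω (s : ℕ)) ∈ S t}) := by
  classical
  have Emono : ∀ s u : ℕ, 1 ≤ s → s ≤ u →
      {ω : ℕ → A | (fun i : Fin s => ω (i : ℕ)) ∈ S s} ⊆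
        {ω : ℕ → A | (fun i : Fin u => ω (i : ℕ)) ∈ S u} := by
    intro s u hs hsu ω hω
    have h := hS s hs _ hω 0 (u - s) ω (fun i => by simp)
    exact castMem' S ω (by omega) h
  refine ⟨fun t ht => Emono t (t + 1) ht (Nat.le_succ t), ?_⟩
  set f : ℕ → ℝ≥0∞ := fun t => μ {ω | (fun i : Fin t => ω (i : ℕ)) ∈ S t} with hf
  have gmono : Monotone (fun n => f (n + 1)) :=
    monotone_nat_of_le_succ fun n =>
      measure_mono (Emono (n + 1) (n + 2) (by omega) (by omega))
  set L : ℝ≥0∞ := ⨆ n, f (n + 1) with hL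
  have hgt : Tendsto (fun n => f (n + 1)) atTop (nhds L) := tendsto_atTop_iSup gmono
  have hft : Tendsto f atTop (nhds L) := (tendsto_add_atTop_iff_nat 1).mp hgt
  have hLle : L ≤ 1 := iSup_le fun n => prob_le_one
  have hfL : ∀ t, 1 ≤ t → f t ≤ L := by
    intro t ht
    have h1 : f t = f (t - 1 + 1) := by rw [Nat.sub_add_cancel ht]
    rw [h1]
    exact le_iSup (fun n => f (n + 1)) (t - 1)
  by_cases hpos : ∃ t, 1 ≤ t ∧ 0 < f t
  · obtain ⟨t₀, ht₀, hp⟩ := hpos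
    have hne : (S t₀).Nonempty := by
      by_contra h
      rw [Set.not_nonempty_iff_eq_empty] at h
      have hzero : f t₀ = 0 := by
        have : {ω : ℕ → A | (fun i : Fin t₀ => ω (i : ℕ)) ∈ S t₀} = ∅ := by
          rw [h]; simp
        rw [hf]; simp only []; rw [this]; exact measure_empty
      rw [hzero] at hp; exact lt_irrefl 0 hp
    have hM1 : 1 ≤ Fintype.card A ^ t₀ := Nat.one_le_pow _ _ Fintype.card_pos
    set q : ℝ≥0∞ := ((Fintype.card A ^ t₀ - 1 : ℕ) : ℝ≥0∞) * (Fintype.card A : ℝ≥0∞)⁻¹ ^ t₀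
      with hq
    have hcpow : ((Fintype.card A : ℝ≥0∞))⁻¹ ^ t₀ = ((Fintype.card A ^ t₀ : ℕ) : ℝ≥0∞)⁻¹ := by
      rw [Nat.cast_pow, ENNReal.inv_pow]
    have hq1 : q < 1 := by
      have h1 : (0 : ℕ) < Fintype.card A ^ t₀ := hM1
      have hne0 : ((Fintype.card A ^ t₀ : ℕ) : ℝ≥0∞) ≠ 0 := Nat.cast_ne_zero.mpr h1.ne'
      have hnetop : ((Fintype.card A ^ t₀ : ℕ) : ℝ≥0∞) ≠ ⊤ := ENNReal.natCast_ne_top _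
      rw [hq, hcpow, ← div_eq_mul_inv, ENNReal.div_lt_iff (Or.inl hne0) (Or.inl hnetop),
        one_mul]
      exact_mod_cast Nat.sub_lt (Nat.lt_of_lt_of_le Nat.zero_lt_one hM1) Nat.zero_lt_one
    have hkey : ∀ n, 1 ≤ n → (1 : ℝ≥0∞) ≤ L + q ^ n := by
      intro n hn
      have h := key' μ hμ S hS (cylinder_bound' μ hμ) ht₀ hne n
      have h2 : ((Fintype.card A ^ t₀ - 1 : ℕ) : ℝ≥0∞) ^ n *
          (Fintype.card A : ℝ≥0∞)⁻¹ ^ (n * t₀) = q ^ n := by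
        rw [hq, mul_pow, ← pow_mul, mul_comm t₀ n]
      rw [h2] at h
      refine h.trans (add_le_add_left (hfL (n * t₀) ?_) _)
      calc 1 = 1 * 1 := by ring
        _ ≤ n * t₀ := Nat.mul_le_mul hn ht₀
    have h0 : Tendsto (fun n : ℕ => L + q ^ n) atTop (nhds (L + 0)) :=
      Tendsto.const_add L (ENNReal.tendsto_pow_atTop_nhds_zero_of_lt_one hq1)
    rw [add_zero] at h0
    have hone : (1 : ℝ≥0∞) ≤ L := ge_of_tendsto h0 (eventually_atTop.mpr ⟨1, hkey⟩)
    have hL1 : L = 1 := le_antisymm hLle hone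
    exact ⟨L, hft, Or.inr hL1, ⟨fun _ => ⟨t₀, ht₀, hp⟩, fun _ => hL1⟩⟩
  · push_neg at hpos
    have hzero : ∀ n : ℕ, f (n + 1) = 0 := by
      intro n
      exact le_antisymm (hpos (n + 1) (by omega)) zero_le
    have hL0 : L = 0 := by
      rw [hL]
      simp [hzero]
    refine ⟨L, hft, Or.inl hL0, ?_⟩
    constructor
    · intro h1
      rw [hL0] at h1
      exact absurd h1.symm one_ne_zero
    · rintro ⟨t, ht, hpt⟩
      exact absurd hpt (not_lt.mpr (hpos t ht))
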